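/- arXiv:2006.01477 — 4 statements merged into one kernel-verified Lean document; each statement's English description precedes it below -/
import Mathlib

section
/- Mutation invariance of the potential in the hypersurface case: with w, u±, S, S', F, F' as in the setup, and additional lattice vectors v_i with w(v_i) = 0, set W = Σ_{v∈S} z^v + Σ_{v∈S'} z^v + Σ_i z^{v_i}. Then the composition φ* = T*_{u⁺,u⁻} ∘ μ*_{-w,F'} ∘ μ*_{w,F} satisfies φ*(W) = W, where T_{u⁺,u⁻} is the integral reflection exchanging u⁺ and u⁻ and fixing w⊥. -/
noncomputable section

/-- The ring of Laurent polynomials in `n` variables over `ℂ`, i.e. the group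
algebra of the lattice `N ≅ ℤⁿ`. -/
abbrev LaurentPoly (n : ℕ) := AddMonoidAlgebra ℂ (Fin n → ℤ)

instance (n : ℕ) : IsDomain (LaurentPoly n) := NoZeroDivisors.to_isDomain _

/-- The field of rational functions on the torus `T_N = (ℂ*)ⁿ`. -/
abbrev RatFn (n : ℕ) := FractionRing (LaurentPoly n)

/-- The Laurent monomial `z^v` attached to a lattice vector `v ∈ N`. -/
def mono (n : ℕ) (v : Fin n → ℤ) : RatFn n :=
  algebraMap (LaurentPoly n) (RatFn n) (AddMonoidAlgebra.single v 1)

set_option maxHeartbeats 1600000 in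
set_option synthInstance.maxHeartbeats 400000 in
/-- Mutation invariance of the potential in the hypersurface case: with
`W = ∑_{v∈S} z^v + ∑_{v∈S'} z^v + ∑ᵢ z^{vᵢ}` (where `w ≡ 1` on `S`, `w ≡ -1` on
`S'` and `w(vᵢ) = 0`), the composition
`φ* = T*_{u⁺,u⁻} ∘ μ*_{-w,F'} ∘ μ*_{w,F}` satisfies `φ*(W) = W`.  Here `φ`, `ψ`
are the pullbacks of the mutations with factors `F = z^{-u⁺}∑_{v∈S} z^v`,
`F' = z^{-u⁻}∑_{v∈S'} z^v`, and `τ` is the pullback of the integral reflection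
`v ↦ v - w(v)(u⁺ - u⁻)`. -/
theorem mutation_invariance_hypersurface (n m : ℕ) (w : (Fin n → ℤ) →ₗ[ℤ] ℤ)
    (up um : Fin n → ℤ) (hup : w up = 1) (hum : w um = -1)
    (S S' : Finset (Fin n → ℤ)) (hdisj : Disjoint S S')
    (hS : ∀ v ∈ S, w v = 1) (hS' : ∀ v ∈ S', w v = -1)
    (hSne : S.Nonempty) (hS'ne : S'.Nonempty)
    (v₀ : Fin m → (Fin n → ℤ)) (hv₀ : ∀ i, w (v₀ i) = 0)
    (φ ψ τ : RatFn n →ₐ[ℂ] RatFn n)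
    (hφ : ∀ v, φ (mono n v) = mono n v *
      (algebraMap (LaurentPoly n) (RatFn n)
        (∑ s ∈ S, AddMonoidAlgebra.single (s - up) (1 : ℂ))) ^ (-(w v)))
    (hψ : ∀ v, ψ (mono n v) = mono n v *
      (algebraMap (LaurentPoly n) (RatFn n)
        (∑ s ∈ S', AddMonoidAlgebra.single (s - um) (1 : ℂ))) ^ (w v))
    (hτ : ∀ v, τ (mono n v) = mono n (v - w v • (up - um))) :
    τ (ψ (φ (∑ v ∈ S, mono n v + ∑ v ∈ S', mono n v + ∑ i : Fin m, mono n (v₀ i)))) =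
      ∑ v ∈ S, mono n v + ∑ v ∈ S', mono n v + ∑ i : Fin m, mono n (v₀ i) := by

  classical
  have hmul : ∀ v v' : Fin n → ℤ, mono n v * mono n v' = mono n (v + v') := by
    intro v v'
    unfold mono
    rw [← map_mul]
    congr 1
    rw [AddMonoidAlgebra.single_mul_single, one_mul]
  set A : RatFn n := algebraMap (LaurentPoly n) (RatFn n)
      (∑ s ∈ S, AddMonoidAlgebra.single (s - up) (1 : ℂ)) with hA
  set B : RatFn n := algebraMap (LaurentPoly n) (RatFn n)
      (∑ s ∈ S', AddMonoidAlgebra.single (s - um) (1 : ℂ)) with hB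
  have key : ∀ (T : Finset (Fin n → ℤ)) (u : Fin n → ℤ), T.Nonempty →
      (∑ s ∈ T, AddMonoidAlgebra.single (s - u) (1 : ℂ)) ≠ 0 := by
    rintro T u ⟨t, ht⟩ h
    have h2 := congrArg (fun f : LaurentPoly n => f.coeff (t - u)) h
    simp only [AddMonoidAlgebra.coeff_sum, Finsupp.finset_sum_apply, AddMonoidAlgebra.coeff_single,
      Finsupp.single_apply, sub_left_inj, AddMonoidAlgebra.coeff_zero,
      Finsupp.coe_zero, Pi.zero_apply, Finset.sum_ite_eq'] at h2
    rw [if_pos ht] at h2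
    exact one_ne_zero h2
  have inj := IsFractionRing.injective (LaurentPoly n) (RatFn n)
  have hAne : A ≠ 0 := fun h => key S up hSne ((map_eq_zero_iff _ inj).mp h)
  have hBne : B ≠ 0 := fun h => key S' um hS'ne ((map_eq_zero_iff _ inj).mp h)
  have hAsum : A = ∑ s ∈ S, mono n (s - up) := by
    rw [hA, map_sum]; rfl
  have hBsum : B = ∑ s ∈ S', mono n (s - um) := by
    rw [hB, map_sum]; rfl
  have hEA : (∑ v ∈ S, mono n v) = A * mono n up := by
    rw [hAsum, Finset.sum_mul]
    exact Finset.sum_congr rfl fun s _ => by rw [hmul]; congr 1; abel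
  have hE'B : (∑ v ∈ S', mono n v) = B * mono n um := by
    rw [hBsum, Finset.sum_mul]
    exact Finset.sum_congr rfl fun s _ => by rw [hmul]; congr 1; abel
  have step1 : φ (∑ v ∈ S, mono n v + ∑ v ∈ S', mono n v + ∑ i : Fin m, mono n (v₀ i))
      = mono n up + B * mono n um * A + ∑ i : Fin m, mono n (v₀ i) := by
    rw [map_add, map_add, map_sum, map_sum, map_sum]
    have h1 : ∑ v ∈ S, φ (mono n v) = mono n up := by
      have hc : ∀ v ∈ S, φ (mono n v) = mono n v * A⁻¹ := fun v hv => by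
        rw [hφ v, hS v hv, zpow_neg, zpow_one]
      rw [Finset.sum_congr rfl hc,
        ← Finset.sum_mul, hEA, mul_comm A, mul_assoc, mul_inv_cancel₀ hAne, mul_one]
    have h2 : ∑ v ∈ S', φ (mono n v) = B * mono n um * A := by
      have hc : ∀ v ∈ S', φ (mono n v) = mono n v * A := fun v hv => by
        rw [hφ v, hS' v hv, neg_neg, zpow_one]
      rw [Finset.sum_congr rfl hc, ← Finset.sum_mul, hE'B]
    have h3 : ∑ i : Fin m, φ (mono n (v₀ i)) = ∑ i : Fin m, mono n (v₀ i) :=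
      Finset.sum_congr rfl fun i _ => by
        rw [hφ, hv₀ i, neg_zero, zpow_zero, mul_one]
    rw [h1, h2, h3]
  have hψA : ψ A = A := by
    rw [hAsum, map_sum]
    exact Finset.sum_congr rfl fun s hs => by
      have hw : w (s - up) = 0 := by rw [map_sub, hS s hs, hup, sub_self]
      rw [hψ, hw, zpow_zero, mul_one]
  have hψB : ψ B = B := by
    rw [hBsum, map_sum]
    exact Finset.sum_congr rfl fun s hs => by
      have hw : w (s - um) = 0 := by rw [map_sub, hS' s hs, hum, sub_self]
      rw [hψ, hw, zpow_zero, mul_one]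
  have step2 : ψ (mono n up + B * mono n um * A + ∑ i : Fin m, mono n (v₀ i))
      = mono n up * B + mono n um * A + ∑ i : Fin m, mono n (v₀ i) := by
    rw [map_add, map_add, map_sum, map_mul, map_mul, hψA, hψB, hψ up, hup, zpow_one,
      hψ um, hum, zpow_neg, zpow_one]
    have h3 : ∑ i : Fin m, ψ (mono n (v₀ i)) = ∑ i : Fin m, mono n (v₀ i) :=
      Finset.sum_congr rfl fun i _ => by rw [hψ, hv₀ i, zpow_zero, mul_one]
    rw [h3, mul_comm (mono n um) B⁻¹, ← mul_assoc, mul_inv_cancel₀ hBne, one_mul]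
  have hupB : mono n up * B = ∑ s ∈ S', mono n (up + (s - um)) := by
    rw [hBsum, Finset.mul_sum]
    exact Finset.sum_congr rfl fun s _ => hmul _ _
  have humA : mono n um * A = ∑ s ∈ S, mono n (um + (s - up)) := by
    rw [hAsum, Finset.mul_sum]
    exact Finset.sum_congr rfl fun s _ => hmul _ _
  rw [step1, step2, hupB, humA, map_add, map_add, map_sum, map_sum, map_sum]
  have t1 : ∑ s ∈ S', τ (mono n (up + (s - um))) = ∑ v ∈ S', mono n v := by
    refine Finset.sum_congr rfl fun s hs => ?_
    have hw : w (up + (s - um)) = 1 := by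
      rw [map_add, map_sub, hup, hS' s hs, hum]; ring
    rw [hτ, hw, one_smul]
    congr 1; abel
  have t2 : ∑ s ∈ S, τ (mono n (um + (s - up))) = ∑ v ∈ S, mono n v := by
    refine Finset.sum_congr rfl fun s hs => ?_
    have hw : w (um + (s - up)) = -1 := by
      rw [map_add, map_sub, hum, hS s hs, hup]; ring
    rw [hτ, hw, neg_smul, one_smul, sub_neg_eq_add]
    congr 1; abel
  have t3 : ∑ i : Fin m, τ (mono n (v₀ i)) = ∑ i : Fin m, mono n (v₀ i) :=
    Finset.sum_congr rfl fun i _ => by rw [hτ, hv₀ i, zero_smul, sub_zero]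
  rw [t1, t2, t3]
  ring
end
end

section
/- Evaluation lemma for concatenated factor products: let w_1, ..., w_c ∈ M be weight vectors, {S_i}, {S'_i} partitions of ray-generator indices such that w_i(v_j) = 1 if j ∈ S_i \ S'_i, w_i(v_j) = -1 if j ∈ S'_i \ S_i, and w_i(v_j) = 0 otherwise, and u⁺_j ∈ N vectors with w_a(u⁺_j) = δ_{aj}. For a sequence (a_1, ..., a_p), let P = z^{u⁺_{a_1}}·∏_{k=1}^{p-1} [a_k, a_{k+1}], where [i,j] = z^{-u⁺_i} Σ_{k ∈ S_i ∩ S'_j} z^{v_k}. Then for any index i > max(a_2, ..., a_{p-1}), every exponent u of a monomial of P satisfies: ⟨w_i, u⟩ = 1 if a_1 = i and a_p ≠ i; ⟨w_i, u⟩ = -1 if a_1 ≠ i and a_p = i; and ⟨w_i, u⟩ = 0 otherwise. -/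
/-- Evaluation lemma for concatenated factor products (Lemma 3.6 of the paper):
with partitions `{Sᵢ}`, `{S'ᵢ}` of `{1, …, R}`, weight vectors `wᵢ`, and auxiliary
vectors `u⁺ⱼ` with `w_a(u⁺ⱼ) = δ_{aj}`, consider a sequence `a₀, …, a_p` (of
vertices; `a₀, …, a_{p-1}` given by `a'` avoid the last vertex so that `u⁺` is
defined there).  A monomial of `P = z^{u⁺_{a₀}} ∏ₖ [aₖ, aₖ₊₁]`, where
`[i,j] = z^{-u⁺ᵢ} ∑_{k ∈ Sᵢ ∩ S'ⱼ} z^{v_k}`, has exponent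
`u = u⁺_{a₀} + ∑ₖ (v_{bₖ} - u⁺_{aₖ})` for a choice `bₖ ∈ S_{aₖ} ∩ S'_{aₖ₊₁}`.
If `i` exceeds all interior entries `a₁, …, a_{p-1}`, then `⟨wᵢ, u⟩` equals `1`
if `a₀ = i` and `a_p ≠ i`, `-1` if `a₀ ≠ i` and `a_p = i`, and `0` otherwise. -/
theorem evaluation_lemma (n R c p : ℕ) (hp : 0 < p)
    (v : Fin R → (Fin n → ℤ))
    (S S' : Fin (c + 1) → Finset (Fin R))
    (hSdisj : ∀ i j, i ≠ j → Disjoint (S i) (S j))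
    (hS'disj : ∀ i j, i ≠ j → Disjoint (S' i) (S' j))
    (hScov : ∀ k, ∃ i, k ∈ S i)
    (hS'cov : ∀ k, ∃ i, k ∈ S' i)
    (w : Fin c → ((Fin n → ℤ) →ₗ[ℤ] ℤ))
    (hw : ∀ (i : Fin c) (k : Fin R), w i (v k) =
      if k ∈ S i.castSucc ∧ k ∉ S' i.castSucc then 1
      else if k ∈ S' i.castSucc ∧ k ∉ S i.castSucc then -1 else 0)
    (up : Fin c → (Fin n → ℤ))
    (hu : ∀ a j : Fin c, w a (up j) = if a = j then 1 else 0)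
    (a : Fin (p + 1) → Fin (c + 1)) (a' : Fin p → Fin c)
    (ha' : ∀ k : Fin p, (a' k).castSucc = a k.castSucc)
    (i : Fin c)
    (hi : ∀ k : Fin (p + 1), k ≠ 0 → k ≠ Fin.last p → (a k : ℕ) < (i : ℕ))
    (b : Fin p → Fin R)
    (hb : ∀ k : Fin p, b k ∈ S (a k.castSucc) ∧ b k ∈ S' (a k.succ)) :
    w i (up (a' ⟨0, hp⟩) + ∑ k : Fin p, (v (b k) - up (a' k))) =
      (if a 0 = i.castSucc then 1 else 0) -
      (if a (Fin.last p) = i.castSucc then 1 else 0) := by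

  have hS1 : ∀ k : Fin p, (b k ∈ S i.castSucc ↔ a k.castSucc = i.castSucc) := by
    intro k
    constructor
    · intro h
      by_contra hne
      exact Finset.disjoint_left.mp (hSdisj _ _ hne) (hb k).1 h
    · intro h; rw [← h]; exact (hb k).1
  have hS2 : ∀ k : Fin p, (b k ∈ S' i.castSucc ↔ a k.succ = i.castSucc) := by
    intro k
    constructor
    · intro h
      by_contra hne
      exact Finset.disjoint_left.mp (hS'disj _ _ hne) (hb k).2 h
    · intro h; rw [← h]; exact (hb k).2
  have haiff : ∀ k : Fin p, ((i = a' k) ↔ a k.castSucc = i.castSucc) := by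
    intro k
    rw [← ha' k]
    constructor
    · intro h; rw [h]
    · intro h; exact (Fin.castSucc_injective _ h).symm
  have hterm : ∀ k : Fin p, w i (v (b k) - up (a' k)) =
      -(if a k.succ = i.castSucc then (1:ℤ) else 0) := by
    intro k
    rw [map_sub, hw, hu]
    by_cases h1 : a k.castSucc = i.castSucc <;> by_cases h2 : a k.succ = i.castSucc <;>
      simp [hS1 k, hS2 k, haiff k, h1, h2]
  have hlt : p - 1 < p := Nat.sub_lt hp one_pos
  have hsuccval : (⟨p - 1, hlt⟩ : Fin p).succ = Fin.last p := by
    ext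
    simp [Nat.sub_add_cancel hp]
  have hsum : ∑ k : Fin p, (if a k.succ = i.castSucc then (1:ℤ) else 0) =
      if a (Fin.last p) = i.castSucc then 1 else 0 := by
    rw [Finset.sum_eq_single (⟨p - 1, hlt⟩ : Fin p)]
    · rw [hsuccval]
    · intro k _ hk
      have hne0 : k.succ ≠ 0 := Fin.succ_ne_zero k
      have hnelast : k.succ ≠ Fin.last p := by
        intro h
        apply hk
        have := congrArg Fin.val h
        simp only [Fin.val_succ, Fin.val_last] at this
        ext
        show (k : ℕ) = p - 1
        omega
      have := hi k.succ hne0 hnelast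
      have hne : a k.succ ≠ i.castSucc := by
        intro h
        rw [h] at this
        simp at this
      simp [hne]
    · intro h; exact absurd (Finset.mem_univ _) h
  have h0 : w i (up (a' ⟨0, hp⟩)) = if a 0 = i.castSucc then 1 else 0 := by
    rw [hu]
    congr 1
    rw [eq_iff_iff]
    have h00 : (⟨0, hp⟩ : Fin p).castSucc = (0 : Fin (p + 1)) := rfl
    rw [← h00]
    exact haiff ⟨0, hp⟩
  rw [map_add, map_sum, h0]
  simp only [hterm]
  rw [Finset.sum_neg_distrib, hsum]
  ring
end

section
/- Existence of auxiliary vectors via paths in the communication graph: let {S_1,...,S_{c+1}} and {S'_1,...,S'_{c+1}} be two partitions of a finite set of lattice vectors in N, and let w_1,...,w_c ∈ M satisfy w_i(v) = 1 for v ∈ S_i \ S'_i, w_i(v) = -1 for v ∈ S'_i \ S_i, and w_i(v) = 0 for all other vectors v in the partitioned set. Define a graph G on vertices {1,...,c+1} with an edge between i and j iff S_i ∩ S'_j ≠ ∅ or S'_i ∩ S_j ≠ ∅. Then for every vertex j lying in the same connected component of G as a distinguished vertex m ≠ j of that component, there exist vectors u⁺_j, u⁻_j ∈ N such that w_j(u±_j)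 = ±1 and w_a(u±_j) = 0 for all a ∉ {j, m} with 1 ≤ a ≤ c. -/
/-- Existence of auxiliary vectors via paths in the communication graph: given two
partitions `{Sᵢ}`, `{S'ᵢ}` (`i = 1, …, c+1`) of the index set of the lattice vectors
`v₁, …, v_R`, and weight vectors `wᵢ` (`i = 1, …, c`) with `wᵢ(v_k) = 1` for
`k ∈ Sᵢ \ S'ᵢ`, `wᵢ(v_k) = -1` for `k ∈ S'ᵢ \ Sᵢ` and `wᵢ(v_k) = 0` otherwise,
form the graph on `{1, …, c+1}` with an edge between `i` and `j` iff
`Sᵢ ∩ S'ⱼ ≠ ∅` or `S'ᵢ ∩ Sⱼ ≠ ∅`.  If the vertex `j` (with `j ≤ c`) lies in the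
same connected component as a distinguished vertex `m ≠ j`, then there are vectors
`u⁺ⱼ, u⁻ⱼ ∈ N` with `wⱼ(u±ⱼ) = ±1` and `w_a(u±ⱼ) = 0` for all `a ∉ {j, m}`. -/
theorem exists_auxiliary_vectors (n R c : ℕ)
    (v : Fin R → (Fin n → ℤ))
    (S S' : Fin (c + 1) → Finset (Fin R))
    (hSdisj : ∀ i j, i ≠ j → Disjoint (S i) (S j))
    (hS'disj : ∀ i j, i ≠ j → Disjoint (S' i) (S' j))
    (hScov : ∀ k, ∃ i, k ∈ S i)
    (hS'cov : ∀ k, ∃ i, k ∈ S' i)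
    (w : Fin c → ((Fin n → ℤ) →ₗ[ℤ] ℤ))
    (hw : ∀ (i : Fin c) (k : Fin R), w i (v k) =
      if k ∈ S i.castSucc ∧ k ∉ S' i.castSucc then 1
      else if k ∈ S' i.castSucc ∧ k ∉ S i.castSucc then -1 else 0)
    (Adj : Fin (c + 1) → Fin (c + 1) → Prop)
    (hAdj : ∀ i j, Adj i j ↔ ((S i ∩ S' j).Nonempty ∨ (S' i ∩ S j).Nonempty))
    (j : Fin c) (m : Fin (c + 1)) (hjm : j.castSucc ≠ m)
    (hconn : Relation.ReflTransGen Adj j.castSucc m) :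
    ∃ up um : Fin n → ℤ, w j up = 1 ∧ w j um = -1 ∧
      ∀ a : Fin c, a ≠ j → a.castSucc ≠ m → w a up = 0 ∧ w a um = 0 := by
  have key : ∀ p q : Fin (c+1), Adj p q → ∃ x : Fin n → ℤ,
      ∀ a : Fin c, w a x =
        (if a.castSucc = p then 1 else 0) - (if a.castSucc = q then 1 else 0) := by
    intro p q hpq
    rw [hAdj] at hpq
    rcases hpq with ⟨k, hk⟩ | ⟨k, hk⟩
    · rw [Finset.mem_inter] at hk
      refine ⟨v k, fun a => ?_⟩
      rw [hw]
      have hS1 : k ∈ S a.castSucc ↔ a.castSucc = p :=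
        ⟨fun h => by
          by_contra hne
          exact Finset.disjoint_left.mp (hSdisj _ _ hne) h hk.1,
         fun h => h ▸ hk.1⟩
      have hS2 : k ∈ S' a.castSucc ↔ a.castSucc = q :=
        ⟨fun h => by
          by_contra hne
          exact Finset.disjoint_left.mp (hS'disj _ _ hne) h hk.2,
         fun h => h ▸ hk.2⟩
      simp only [hS1, hS2]
      by_cases h1 : a.castSucc = p <;> by_cases h2 : a.castSucc = q <;>
        by_cases h3 : p = q <;> simp_all
    · rw [Finset.mem_inter] at hk
      refine ⟨-v k, fun a => ?_⟩
      rw [map_neg, hw]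
      have hS1 : k ∈ S a.castSucc ↔ a.castSucc = q :=
        ⟨fun h => by
          by_contra hne
          exact Finset.disjoint_left.mp (hSdisj _ _ hne) h hk.2,
         fun h => h ▸ hk.2⟩
      have hS2 : k ∈ S' a.castSucc ↔ a.castSucc = p :=
        ⟨fun h => by
          by_contra hne
          exact Finset.disjoint_left.mp (hS'disj _ _ hne) h hk.1,
         fun h => h ▸ hk.1⟩
      simp only [hS1, hS2]
      by_cases h1 : a.castSucc = p <;> by_cases h2 : a.castSucc = q <;>
        by_cases h3 : p = q <;> simp_all
  have main : ∀ p : Fin (c+1), Relation.ReflTransGen Adj j.castSucc p →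
      ∃ u : Fin n → ℤ, ∀ a : Fin c, w a u =
        (if a.castSucc = j.castSucc then 1 else 0) - (if a.castSucc = p then 1 else 0) := by
    intro p hp
    induction hp with
    | refl => exact ⟨0, fun a => by simp⟩
    | tail hst hedge ih =>
        obtain ⟨u, hu⟩ := ih
        obtain ⟨x, hx⟩ := key _ _ hedge
        refine ⟨u + x, fun a => ?_⟩
        rw [map_add, hu a, hx a]
        ring
  obtain ⟨u, hu⟩ := main m hconn
  refine ⟨u, -u, ?_, ?_, fun a ha ham => ?_⟩
  · rw [hu j]; simp [hjm]
  · rw [map_neg, hu j]; simp [hjm]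
  · have ha' : a.castSucc ≠ j.castSucc := fun h => ha (Fin.castSucc_injective _ h)
    rw [map_neg, hu a]
    simp [ha', ham]
end

section
/- Hilly concatenation: if (a_2, ..., a_{p-1}) is a hilly sequence all of whose entries are at most j, and (b_2, ..., b_{q-1}) is a hilly sequence all of whose entries are at most j, then the concatenated sequence (a_2, ..., a_{p-1}, j+1, b_2, ..., b_{q-1}) is hilly. -/
/-- A finite sequence of positive integers is *hilly* if whenever two entries at
positions `i < j` are equal, some entry at a position `k` with `i ≤ k ≤ j`
strictly exceeds their common value. -/
def Hilly (l : List ℕ) : Prop :=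
  ∀ i j : Fin l.length, i < j → l.get i = l.get j →
    ∃ k : Fin l.length, i ≤ k ∧ k ≤ j ∧ l.get i < l.get k

/-- Hilly concatenation: if `l₁` and `l₂` are hilly sequences all of whose entries
are at most `j`, then the concatenation `l₁ ++ [j+1] ++ l₂` is hilly. -/
theorem hilly_concat (j : ℕ) (l₁ l₂ : List ℕ)
    (hpos₁ : ∀ x ∈ l₁, 0 < x) (hpos₂ : ∀ x ∈ l₂, 0 < x)
    (h₁ : Hilly l₁) (h₂ : Hilly l₂)
    (hb₁ : ∀ x ∈ l₁, x ≤ j) (hb₂ : ∀ x ∈ l₂, x ≤ j) :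
    Hilly (l₁ ++ (j + 1) :: l₂) := by
  intro a b hab heq
  have hL : (l₁ ++ (j + 1) :: l₂).length = l₁.length + (l₂.length + 1) := by simp
  have ha : (a : ℕ) < l₁.length + (l₂.length + 1) := lt_of_lt_of_eq a.isLt hL
  have hbb : (b : ℕ) < l₁.length + (l₂.length + 1) := lt_of_lt_of_eq b.isLt hL
  have gleft : ∀ (i : Fin (l₁ ++ (j + 1) :: l₂).length) (h : (i : ℕ) < l₁.length),
      (l₁ ++ (j + 1) :: l₂).get i = l₁[(i : ℕ)] := by
    intro i h
    simp only [List.get_eq_getElem]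
    exact List.getElem_append_left h
  have gmid : ∀ (i : Fin (l₁ ++ (j + 1) :: l₂).length) (h : (i : ℕ) = l₁.length),
      (l₁ ++ (j + 1) :: l₂).get i = j + 1 := by
    intro i h
    simp only [List.get_eq_getElem]
    rw [List.getElem_append_right (by omega)]
    simp [h]
  have gright : ∀ (i : Fin (l₁ ++ (j + 1) :: l₂).length) (h : l₁.length < (i : ℕ)),
      (l₁ ++ (j + 1) :: l₂).get i = l₂[(i : ℕ) - l₁.length - 1]'(by
        have h2 : (i : ℕ) < l₁.length + (l₂.length + 1) := lt_of_lt_of_eq i.isLt hL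
        omega) := by
    intro i h
    simp only [List.get_eq_getElem]
    rw [List.getElem_append_right (by omega)]
    obtain ⟨m, hm1⟩ : ∃ m, (i : ℕ) - l₁.length = m + 1 :=
      ⟨(i : ℕ) - l₁.length - 1, by omega⟩
    simp only [hm1, List.getElem_cons_succ, Nat.add_sub_cancel]
  rcases lt_trichotomy (a : ℕ) l₁.length with hc | hc | hc
  · rcases lt_trichotomy (b : ℕ) l₁.length with hd | hd | hd
    · -- both in l₁
      rw [gleft a hc, gleft b hd] at heq
      obtain ⟨k, hk1, hk2, hk3⟩ := h₁ ⟨a, hc⟩ ⟨b, hd⟩ (by simpa using hab) (by simpa using heq)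
      refine ⟨⟨k, by have := k.isLt; omega⟩, ?_, ?_, ?_⟩
      · exact hk1
      · exact hk2
      · rw [gleft a hc, gleft ⟨k, by have := k.isLt; omega⟩ k.isLt]
        simpa using hk3
    · -- b is the middle: values can't be equal
      rw [gleft a hc, gmid b hd] at heq
      have : l₁[(a : ℕ)] ≤ j := hb₁ _ (List.getElem_mem _)
      omega
    · -- a in l₁, b in l₂: witness the middle
      refine ⟨⟨l₁.length, by omega⟩, by exact_mod_cast hc.le, by exact_mod_cast hd.le, ?_⟩
      rw [gleft a hc, gmid ⟨l₁.length, by omega⟩ rfl]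
      have : l₁[(a : ℕ)] ≤ j := hb₁ _ (List.getElem_mem _)
      omega
  · -- a is the middle
    have hd : l₁.length < (b : ℕ) := by
      have : (a : ℕ) < (b : ℕ) := hab
      omega
    rw [gmid a hc, gright b hd] at heq
    have : l₂[(b : ℕ) - l₁.length - 1]'(by omega) ≤ j := hb₂ _ (List.getElem_mem _)
    omega
  · -- both in l₂
    have hd : l₁.length < (b : ℕ) := by
      have : (a : ℕ) < (b : ℕ) := hab
      omega
    rw [gright a hc, gright b hd] at heq
    obtain ⟨k, hk1, hk2, hk3⟩ := h₂ ⟨(a : ℕ) - l₁.length - 1, by omega⟩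
      ⟨(b : ℕ) - l₁.length - 1, by omega⟩
      (by simp only [Fin.mk_lt_mk]; have : (a : ℕ) < (b : ℕ) := hab; omega)
      (by simpa using heq)
    have hkl := k.isLt
    have hK : (k : ℕ) + l₁.length + 1 < (l₁ ++ (j + 1) :: l₂).length := by omega
    refine ⟨⟨(k : ℕ) + l₁.length + 1, hK⟩, ?_, ?_, ?_⟩
    · have hk1' : (a : ℕ) - l₁.length - 1 ≤ (k : ℕ) := hk1
      simp only [Fin.le_def]
      omega
    · have hk2' : (k : ℕ) ≤ (b : ℕ) - l₁.length - 1 := hk2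
      simp only [Fin.le_def]
      omega
    · have e1 := gright a hc
      have e2 := gright ⟨(k : ℕ) + l₁.length + 1, hK⟩
        (by show l₁.length < (k : ℕ) + l₁.length + 1; omega)
      have hke : (k : ℕ) + l₁.length + 1 - l₁.length - 1 = (k : ℕ) := by omega
      simp only [Fin.val_mk, hke] at e2
      rw [e1, e2]
      simpa using hk3
end
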